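/- The symmetric 4×4 matrix M with rows (0,100,9,4), (100,0,4,36), (9,4,0,1), (4,36,1,0) has at least two strictly positive eigenvalues; equivalently, the squared-coefficient polynomial f₂ = 100wx + 9wy + 4wz + 4xy + 36xz obtained by squaring the coefficients of the strongly log-concave polynomial f = 10wx + 3wy + 2wz + 2xy + 6xz is not strongly log-concave. -/

import Mathlib

open Finset

/-- Auxiliary: if three of four reals summing to `0` are nonpositive, the
product of all four cannot be positive. -/
lemma key_aux (a b c d : ℝ) (hsum : a + b + c + d = 0) (hprod : 0 < a * b * c * d)
    (hb : b ≤ 0) (hc : c ≤ 0) (hd : d ≤ 0) : False := by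
  nlinarith [mul_nonneg (mul_nonneg (neg_nonneg.2 hb) (neg_nonneg.2 hc)) (neg_nonneg.2 hd),
    show (0:ℝ) ≤ a by linarith]

/-- Auxiliary sign lemma: four reals summing to `0` with positive product
must contain at least two positive ones. -/
lemma two_pos_of_sum_zero_prod_pos (a b c d : ℝ)
    (hsum : a + b + c + d = 0) (hprod : 0 < a * b * c * d) :
    2 ≤ (if 0 < a then 1 else 0) + (if 0 < b then 1 else 0) +
        (if 0 < c then 1 else 0) + (if 0 < d then 1 else 0) := by
  rcases le_or_gt a 0 with ha | ha <;> rcases le_or_gt b 0 with hb | hb <;>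
    rcases le_or_gt c 0 with hc | hc <;> rcases le_or_gt d 0 with hd | hd <;>
    first
      | exact (key_aux a b c d hsum hprod hb hc hd).elim
      | exact (key_aux b a c d (by linarith)
          (by linarith [hprod, show a*b*c*d = b*a*c*d from by ring]) ha hc hd).elim
      | exact (key_aux c a b d (by linarith)
          (by linarith [hprod, show a*b*c*d = c*a*b*d from by ring]) ha hb hd).elim
      | exact (key_aux d a b c (by linarith)
          (by linarith [hprod, show a*b*c*d = d*a*b*c from by ring]) ha hb hc).elim
      | ((first | rw [if_pos ha] | rw [if_neg (not_lt.2 ha)]) <;>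
         (first | rw [if_pos hb] | rw [if_neg (not_lt.2 hb)]) <;>
         (first | rw [if_pos hc] | rw [if_neg (not_lt.2 hc)]) <;>
         (first | rw [if_pos hd] | rw [if_neg (not_lt.2 hd)]) <;>
         norm_num)

/-- The trace of a real symmetric matrix is the sum of its eigenvalues. -/
lemma trace_eq_sum_eigenvalues' {n : Type*} [Fintype n] [DecidableEq n]
    {A : Matrix n n ℝ} (hA : A.IsHermitian) :
    A.trace = ∑ i, hA.eigenvalues i := by
  conv_lhs => rw [hA.spectral_theorem]
  rw [Unitary.conjStarAlgAut_apply]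
  rw [Matrix.trace_mul_cycle,
    Matrix.mem_unitaryGroup_iff'.mp (Matrix.IsHermitian.eigenvectorUnitary hA).2,
    Matrix.one_mul, Matrix.trace_diagonal]
  simp

/-- the Hessian of the squared-coefficient polynomial
`f₂ = 100wx + 9wy + 4wz + 4xy + 36xz` has at least two strictly positive
eigenvalues, so `f₂` is not strongly log-concave. -/
theorem counterexample_two_pos_eigenvalues
    (hM : (!![(0:ℝ), 100, 9, 4; 100, 0, 4, 36; 9, 4, 0, 1; 4, 36, 1, 0]).IsHermitian) :
    2 ≤ (Finset.univ.filter fun i => 0 < hM.eigenvalues i).card := by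
  set lam := hM.eigenvalues with hlam
  have hsum : lam 0 + lam 1 + lam 2 + lam 3 = 0 := by
    have h := trace_eq_sum_eigenvalues' hM
    rw [Fin.sum_univ_four] at h
    rw [← h]
    simp [Matrix.trace, Fin.sum_univ_four]
  have hprod : 0 < lam 0 * lam 1 * lam 2 * lam 3 := by
    have h := hM.det_eq_prod_eigenvalues
    rw [Fin.prod_univ_four] at h
    have hdet : (!![(0:ℝ), 100, 9, 4; 100, 0, 4, 36; 9, 4, 0, 1; 4, 36, 1, 0]).det
        = 36864 := by
      simp [Matrix.det_succ_row_zero, Fin.sum_univ_succ,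
        show Fin.succAbove (1:Fin 4) 2 = 3 from rfl, show Fin.succAbove (2:Fin 4) 2 = 3 from rfl,
        show Fin.succAbove (3:Fin 4) 2 = 2 from rfl]
      norm_num
    rw [hdet] at h
    have h2 : lam 0 * lam 1 * lam 2 * lam 3 = 36864 := by exact_mod_cast h.symm
    rw [h2]
    norm_num
  rw [Finset.card_filter, Fin.sum_univ_four]
  exact two_pos_of_sum_zero_prod_pos (lam 0) (lam 1) (lam 2) (lam 3) hsum hprod
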